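/- Let v₁, v₂, q be polynomials in two real variables x, y and set v = (v₁, v₂). Assume that for every x ∈ ℝ and for k = 1, 2 one has v_k(x, 0) = 0, (∂v_k/∂y)(x, 0) = 0 and (∂²v_k/∂y²)(x, 0) = 0. Assume moreover that −Δv + ∇q = 0 and ∂v₁/∂x + ∂v₂/∂y = 0 hold identically on ℝ². Then v₁ and v₂ are identically zero and q is a constant polynomial. -/

import Mathlib

open MvPolynomial

noncomputable section

namespace StokesAux

open Polynomial

abbrev MvP := MvPolynomial (Fin 2) ℝ

lemma pd_comm (i j : Fin 2) (p : MvP) :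
    pderiv i (pderiv j p) = pderiv j (pderiv i p) := by
  induction p using MvPolynomial.induction_on' with
  | add p q hp hq => simp [hp, hq]
  | monomial s a =>
    rcases eq_or_ne i j with rfl | hij
    · rfl
    · simp only [pderiv_monomial, Finsupp.tsub_apply,
        Finsupp.single_eq_of_ne hij, Finsupp.single_eq_of_ne (Ne.symm hij), tsub_zero]
      rw [tsub_tsub, tsub_tsub, add_comm (Finsupp.single j 1)]
      congr 1
      ring

def φ : MvP →ₐ[ℝ] ℝ[X] := aeval ![Polynomial.X, 0]

def ψ (x : ℝ) : MvP →ₐ[ℝ] ℝ[X] := aeval ![Polynomial.C x, Polynomial.X]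

lemma φ_pderiv (p : MvP) : φ (pderiv 0 p) = derivative (φ p) := by
  induction p using MvPolynomial.induction_on with
  | C a => simp [φ]
  | add p q hp hq => simp [hp, hq]
  | mul_X p i hp =>
    simp only [φ] at hp ⊢
    fin_cases i <;>
      simp [pderiv_mul, hp, Polynomial.derivative_mul] <;> ring

lemma ψ_pderiv (x : ℝ) (p : MvP) : ψ x (pderiv 1 p) = derivative (ψ x p) := by
  induction p using MvPolynomial.induction_on with
  | C a => simp [ψ]
  | add p q hp hq => simp [hp, hq]
  | mul_X p i hp =>
    simp only [ψ] at hp ⊢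
    fin_cases i <;>
      simp [pderiv_mul, hp, Polynomial.derivative_mul] <;> ring


lemma it_add (n : ℕ) (p q : MvP) :
    (pderiv (1 : Fin 2))^[n] (p + q) = (pderiv 1)^[n] p + (pderiv 1)^[n] q := by
  induction n with
  | zero => rfl
  | succ n ih => simp [Function.iterate_succ_apply', ih]

lemma it_zero (n : ℕ) : (pderiv (1 : Fin 2))^[n] (0 : MvP) = 0 := by
  induction n with
  | zero => rfl
  | succ n ih => simp [Function.iterate_succ_apply', ih]

lemma it_pd0 (n : ℕ) (p : MvP) :
    (pderiv (1 : Fin 2))^[n] (pderiv 0 p) = pderiv 0 ((pderiv 1)^[n] p) := by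
  induction n with
  | zero => rfl
  | succ n ih =>
    rw [Function.iterate_succ_apply', ih, Function.iterate_succ_apply', pd_comm]

lemma it_ψ (x : ℝ) (n : ℕ) (p : MvP) :
    ψ x ((pderiv 1)^[n] p) = derivative^[n] (ψ x p) := by
  induction n with
  | zero => rfl
  | succ n ih =>
    rw [Function.iterate_succ_apply', ψ_pderiv, ih, Function.iterate_succ_apply']

lemma mv_aeval_eq_eval (f : Fin 2 → ℝ) (p : MvP) : aeval f p = eval f p := by
  rw [MvPolynomial.aeval_def]; rfl

lemma eval_φ (x : ℝ) (p : MvP) : Polynomial.eval x (φ p) = eval ![x, 0] p := by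
  have h := MvPolynomial.comp_aeval_apply (Polynomial.aeval x : ℝ[X] →ₐ[ℝ] ℝ)
    (f := ![Polynomial.X, 0]) p
  have h2 : (fun i => (Polynomial.aeval x) (![Polynomial.X, (0:ℝ[X])] i)) = ![x, 0] := by
    funext i; fin_cases i <;> simp
  rw [h2] at h
  rw [φ, ← mv_aeval_eq_eval, ← h, Polynomial.coe_aeval_eq_eval]

lemma eval_ψ (x y : ℝ) (p : MvP) : Polynomial.eval y (ψ x p) = eval ![x, y] p := by
  have h := MvPolynomial.comp_aeval_apply (Polynomial.aeval y : ℝ[X] →ₐ[ℝ] ℝ)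
    (f := ![Polynomial.C x, Polynomial.X]) p
  have h2 : (fun i => (Polynomial.aeval y) (![Polynomial.C x, Polynomial.X] i)) = ![x, y] := by
    funext i; fin_cases i <;> simp
  rw [h2] at h
  rw [ψ, ← mv_aeval_eq_eval, ← h, Polynomial.coe_aeval_eq_eval]

/-- A univariate real polynomial whose iterated derivatives all vanish at `0` is zero. -/
lemma poly_vanish (P : ℝ[X]) (h : ∀ n, Polynomial.eval 0 (derivative^[n] P) = 0) : P = 0 := by
  ext n
  have h1 := h n
  rw [← Polynomial.coeff_zero_eq_eval_zero, Polynomial.coeff_iterate_derivative] at h1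
  simp only [zero_add, Nat.descFactorial_self, smul_eq_mul, nsmul_eq_mul] at h1
  have hf : ((Nat.factorial n : ℕ) : ℝ) ≠ 0 := by exact_mod_cast Nat.factorial_ne_zero n
  simpa [hf] using h1

lemma vec_eta (g : Fin 2 → ℝ) : ![g 0, g 1] = g := by
  funext i; fin_cases i <;> rfl

/-- A bivariate polynomial all of whose iterated `y`-derivatives vanish on the x-axis is zero. -/
lemma mv_vanish (p : MvP) (h : ∀ (n : ℕ) (x : ℝ), eval ![x, 0] ((pderiv 1)^[n] p) = 0) :
    p = 0 := by
  apply MvPolynomial.funext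
  intro g
  rw [map_zero, ← vec_eta g, ← eval_ψ]
  have hP : ψ (g 0) p = 0 := by
    apply poly_vanish
    intro n
    rw [← it_ψ, eval_ψ]
    exact h n (g 0)
  rw [hP, Polynomial.eval_zero]


lemma φ_eq_zero (p : MvP) (h : ∀ x : ℝ, eval ![x, 0] p = 0) : φ p = 0 := by
  apply Polynomial.funext
  intro r
  rw [eval_φ, h, Polynomial.eval_zero]

lemma push2 (r s : MvP) (h : pderiv 0 (pderiv 0 r) + pderiv 1 (pderiv 1 r) = s) (n : ℕ) :
    derivative (derivative (φ ((pderiv 1)^[n] r))) + φ ((pderiv 1)^[n + 2] r)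
      = φ ((pderiv 1)^[n] s) := by
  have h1 : (pderiv (1 : Fin 2))^[n] (pderiv 0 (pderiv 0 r) + pderiv 1 (pderiv 1 r))
      = (pderiv 1)^[n] s := by rw [h]
  rw [it_add, it_pd0, it_pd0] at h1
  have h2 : (pderiv (1 : Fin 2))^[n] (pderiv 1 (pderiv 1 r)) = (pderiv 1)^[n + 2] r := by
    rw [← Function.iterate_succ_apply, ← Function.iterate_succ_apply]
  rw [h2] at h1
  have h3 := congrArg φ h1
  rw [map_add, φ_pderiv, φ_pderiv] at h3
  exact h3

lemma pushdiv (r s : MvP) (h : pderiv 0 r + pderiv 1 s = 0) (n : ℕ) :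
    derivative (φ ((pderiv 1)^[n] r)) + φ ((pderiv 1)^[n + 1] s) = 0 := by
  have h1 : (pderiv (1 : Fin 2))^[n] (pderiv 0 r + pderiv 1 s) = 0 := by rw [h, it_zero]
  rw [it_add, it_pd0, ← Function.iterate_succ_apply] at h1
  have h3 := congrArg φ h1
  rw [map_add, φ_pderiv, map_zero] at h3
  exact h3

end StokesAux

end

open StokesAux

theorem polynomial_stokes_vanishing_on_x_axis
    (v₁ v₂ q : MvPolynomial (Fin 2) ℝ)
    (h0 : ∀ x : ℝ, eval ![x, 0] v₁ = 0 ∧ eval ![x, 0] v₂ = 0)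
    (h1 : ∀ x : ℝ, eval ![x, 0] (pderiv 1 v₁) = 0 ∧ eval ![x, 0] (pderiv 1 v₂) = 0)
    (h2 : ∀ x : ℝ, eval ![x, 0] (pderiv 1 (pderiv 1 v₁)) = 0 ∧
      eval ![x, 0] (pderiv 1 (pderiv 1 v₂)) = 0)
    (hstokes₁ : -(pderiv 0 (pderiv 0 v₁) + pderiv 1 (pderiv 1 v₁)) + pderiv 0 q = 0)
    (hstokes₂ : -(pderiv 0 (pderiv 0 v₂) + pderiv 1 (pderiv 1 v₂)) + pderiv 1 q = 0)
    (hdiv : pderiv 0 v₁ + pderiv 1 v₂ = 0) :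
    v₁ = 0 ∧ v₂ = 0 ∧ ∃ c : ℝ, q = C c := by
  have eq₁ : pderiv 0 (pderiv 0 v₁) + pderiv 1 (pderiv 1 v₁) = pderiv 0 q := by
    linear_combination -hstokes₁
  have eq₂ : pderiv 0 (pderiv 0 v₂) + pderiv 1 (pderiv 1 v₂) = pderiv 1 q := by
    linear_combination -hstokes₂
  -- the pressure is harmonic
  have comm01 : ∀ p : MvPolynomial (Fin 2) ℝ,
      pderiv (0 : Fin 2) (pderiv 1 p) = pderiv 1 (pderiv 0 p) := fun p => pd_comm 0 1 p
  have hq : pderiv 0 (pderiv 0 q) + pderiv 1 (pderiv 1 q) = (0 : MvPolynomial (Fin 2) ℝ) := by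
    have e1 := congrArg (pderiv (0 : Fin 2)) eq₁
    have e2 := congrArg (pderiv (1 : Fin 2)) eq₂
    have e3 := congrArg (fun r => pderiv (0 : Fin 2) (pderiv 0 r)) hdiv
    have e4 := congrArg (fun r => pderiv (1 : Fin 2) (pderiv 1 r)) hdiv
    simp only [map_add, map_zero] at e1 e2 e3 e4
    simp only [comm01] at e1 e2 e3 e4
    linear_combination -e1 - e2 + e3 + e4
  -- base facts
  have ha0 : φ v₁ = 0 := φ_eq_zero _ fun x => (h0 x).1
  have hb0 : φ v₂ = 0 := φ_eq_zero _ fun x => (h0 x).2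
  have ha1 : φ (pderiv 1 v₁) = 0 := φ_eq_zero _ fun x => (h1 x).1
  have hb1 : φ (pderiv 1 v₂) = 0 := φ_eq_zero _ fun x => (h1 x).2
  have ha2 : φ (pderiv 1 (pderiv 1 v₁)) = 0 := φ_eq_zero _ fun x => (h2 x).1
  have hb2 : φ (pderiv 1 (pderiv 1 v₂)) = 0 := φ_eq_zero _ fun x => (h2 x).2
  have it2 : ∀ p : MvPolynomial (Fin 2) ℝ,
      (pderiv (1 : Fin 2))^[2] p = pderiv 1 (pderiv 1 p) := fun p => rfl
  -- the recurrences
  have S1 : ∀ n, Polynomial.derivative (Polynomial.derivative (φ ((pderiv 1)^[n] v₁)))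
      + φ ((pderiv 1)^[n + 2] v₁)
      = Polynomial.derivative (φ ((pderiv 1)^[n] q)) := by
    intro n
    have h3 := push2 v₁ (pderiv 0 q) eq₁ n
    rw [it_pd0, φ_pderiv] at h3
    exact h3
  have S2 : ∀ n, Polynomial.derivative (Polynomial.derivative (φ ((pderiv 1)^[n] v₂)))
      + φ ((pderiv 1)^[n + 2] v₂)
      = φ ((pderiv 1)^[n + 1] q) := by
    intro n
    have h3 := push2 v₂ (pderiv 1 q) eq₂ n
    rw [← Function.iterate_succ_apply] at h3
    exact h3
  have HARM : ∀ n, Polynomial.derivative (Polynomial.derivative (φ ((pderiv 1)^[n] q)))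
      + φ ((pderiv 1)^[n + 2] q) = 0 := by
    intro n
    have h3 := push2 q 0 hq n
    rw [it_zero, map_zero] at h3
    exact h3
  have DIV : ∀ n, Polynomial.derivative (φ ((pderiv 1)^[n] v₁))
      + φ ((pderiv 1)^[n + 1] v₂) = 0 := fun n => pushdiv v₁ v₂ hdiv n
  -- pressure coefficients vanish
  have hdc0 : Polynomial.derivative (φ ((pderiv (1 : Fin 2))^[0] q)) = 0 := by
    have h3 := S1 0
    rw [show (pderiv (1 : Fin 2))^[0] v₁ = v₁ from rfl, ha0, it2, ha2] at h3
    simpa using h3.symm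
  have hc1 : φ ((pderiv (1 : Fin 2))^[1] q) = 0 := by
    have h3 := S2 0
    rw [show (pderiv (1 : Fin 2))^[0] v₂ = v₂ from rfl, hb0, it2, hb2] at h3
    simpa using h3.symm
  have hc2 : φ ((pderiv (1 : Fin 2))^[2] q) = 0 := by
    have h3 := HARM 0
    rw [hdc0] at h3
    simpa using h3
  have hcsucc : ∀ n, φ ((pderiv (1 : Fin 2))^[n + 1] q) = 0 := by
    have key : ∀ n, φ ((pderiv (1 : Fin 2))^[n + 1] q) = 0 ∧
        φ ((pderiv (1 : Fin 2))^[n + 2] q) = 0 := by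
      intro n
      induction n with
      | zero => exact ⟨hc1, hc2⟩
      | succ n ih =>
        refine ⟨ih.2, ?_⟩
        have h3 := HARM (n + 1)
        rw [ih.1] at h3
        simpa using h3
    exact fun n => (key n).1
  have hdc : ∀ n, Polynomial.derivative (φ ((pderiv (1 : Fin 2))^[n] q)) = 0 := by
    intro n
    cases n with
    | zero => exact hdc0
    | succ n => rw [hcsucc n]; simp
  -- velocity coefficients vanish
  have hA : ∀ n, φ ((pderiv (1 : Fin 2))^[n] v₁) = 0 := by
    have key : ∀ n, φ ((pderiv (1 : Fin 2))^[n] v₁) = 0 ∧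
        φ ((pderiv (1 : Fin 2))^[n + 1] v₁) = 0 := by
      intro n
      induction n with
      | zero =>
        refine ⟨by simpa using ha0, ?_⟩
        simpa using ha1
      | succ n ih =>
        refine ⟨ih.2, ?_⟩
        have h3 := S1 n
        rw [ih.1, hdc n] at h3
        simpa using h3
    exact fun n => (key n).1
  have hB : ∀ n, φ ((pderiv (1 : Fin 2))^[n] v₂) = 0 := by
    intro n
    cases n with
    | zero => simpa using hb0
    | succ n =>
      have h3 := DIV n
      rw [hA n] at h3
      simpa using h3
  have hv₁ : v₁ = 0 := by
    apply mv_vanish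
    intro n x
    rw [← eval_φ, hA n, Polynomial.eval_zero]
  have hv₂ : v₂ = 0 := by
    apply mv_vanish
    intro n x
    rw [← eval_φ, hB n, Polynomial.eval_zero]
  have hq0 : pderiv (0 : Fin 2) q = 0 := by
    rw [hv₁] at hstokes₁; simpa using hstokes₁
  have hq1 : pderiv (1 : Fin 2) q = 0 := by
    rw [hv₂] at hstokes₂; simpa using hstokes₂
  refine ⟨hv₁, hv₂, eval ![0, 0] q, ?_⟩
  apply MvPolynomial.funext
  intro g
  rw [MvPolynomial.eval_C, ← vec_eta g, ← eval_ψ]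
  have hψd : Polynomial.derivative (ψ (g 0) q) = 0 := by
    rw [← ψ_pderiv, hq1, map_zero]
  rw [Polynomial.eq_C_of_derivative_eq_zero hψd, Polynomial.eval_C]
  have hk0 : (ψ (g 0) q).coeff 0 = eval ![g 0, 0] q := by
    conv_rhs => rw [← eval_ψ]
    rw [Polynomial.coeff_zero_eq_eval_zero]
  have hφd : Polynomial.derivative (φ q) = 0 := by
    rw [← φ_pderiv, hq0, map_zero]
  have h5 : eval ![g 0, 0] q = eval ![0, 0] q := by
    rw [← eval_φ, ← eval_φ, Polynomial.eq_C_of_derivative_eq_zero hφd,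
      Polynomial.eval_C, Polynomial.eval_C]
  rw [hk0, h5]
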